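/- If an operator concave free function F on a matrix convex domain satisfies 0 ∈ D(ℂ) and F(0) ≥ 0, then the Jensen inequality F((I_A ⊗ W*)X(I_A ⊗ W)) ≥ W*F(X)W holds for all contractions W : E → K (not just isometries) and all X ∈ D(K) with (I_A ⊗ W*)X(I_A ⊗ W) ∈ D(E). -/

import Mathlib

open Matrix
open scoped ComplexOrder

abbrev Mat (d : ℕ) := Matrix (Fin d) (Fin d) ℂ

/-- Loewner order: `A ≤ B` iff `B - A` is positive semi-definite. -/
def Loewner {d : ℕ} (A B : Mat d) : Prop := (B - A).PosSemidef

/-- Direct sum of square matrices, realized on `Fin (d + d')`. -/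
def dsumM {d d' : ℕ} (X : Mat d) (Y : Mat d') : Mat (d + d') :=
  Matrix.reindex finSumFinEquiv finSumFinEquiv (Matrix.fromBlocks X 0 0 Y)

/-- A graded family of sets of `k`-tuples of matrices (the case `𝒜 = ℂᵏ`,
finite-dimensional `E`) is a self-adjoint matrix convex set: closed under
unitary conjugation, direct sums, isometric conjugation and the adjoint. -/
structure IsSAMatrixConvex (k : ℕ) (D : ∀ d : ℕ, Set (Fin k → Mat d)) : Prop where
  unitary : ∀ (d : ℕ) (U : Mat d), U ∈ Matrix.unitaryGroup (Fin d) ℂ →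
    ∀ X ∈ D d, (fun i => Uᴴ * X i * U) ∈ D d
  dsum : ∀ (d d' : ℕ), ∀ X ∈ D d, ∀ Y ∈ D d',
    (fun i => dsumM (X i) (Y i)) ∈ D (d + d')
  isom : ∀ (d d' : ℕ) (V : Matrix (Fin d') (Fin d) ℂ), Vᴴ * V = 1 →
    ∀ X ∈ D d', (fun i => Vᴴ * X i * V) ∈ D d
  selfAdj : ∀ (d : ℕ), ∀ X ∈ D d, (fun i => (X i)ᴴ) ∈ D d

/-- A graded family of functions is a free function on the domain `D`:
it preserves unitary conjugation and direct sums. -/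
structure IsFreeFn (k : ℕ) (D : ∀ d : ℕ, Set (Fin k → Mat d))
    (F : ∀ d : ℕ, (Fin k → Mat d) → Mat d) : Prop where
  unitary : ∀ (d : ℕ) (U : Mat d), U ∈ Matrix.unitaryGroup (Fin d) ℂ →
    ∀ X ∈ D d, F d (fun i => Uᴴ * X i * U) = Uᴴ * F d X * U
  dsum : ∀ (d d' : ℕ), ∀ X ∈ D d, ∀ Y ∈ D d',
    F (d + d') (fun i => dsumM (X i) (Y i)) = dsumM (F d X) (F d' Y)

/-- Operator concavity of a free function on `D`. -/
def IsOpConcave (k : ℕ) (D : ∀ d : ℕ, Set (Fin k → Mat d))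
    (F : ∀ d : ℕ, (Fin k → Mat d) → Mat d) : Prop :=
  ∀ (d : ℕ), ∀ X ∈ D d, ∀ Y ∈ D d, ∀ t : ℝ, 0 ≤ t → t ≤ 1 →
    Loewner (((1 - t : ℝ) : ℂ) • F d X + (t : ℂ) • F d Y)
      (F d (fun i => ((1 - t : ℝ) : ℂ) • X i + (t : ℂ) • Y i))

/-! ### Auxiliary material -/

namespace Stmt13Aux

/-- Embedding of the first summand `Fin a → Fin (a+b)` as a matrix. -/
noncomputable def emb₁ (a b : ℕ) : Matrix (Fin (a+b)) (Fin a) ℂ :=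
  (Matrix.fromRows (1 : Mat a) (0 : Matrix (Fin b) (Fin a) ℂ)).submatrix
    finSumFinEquiv.symm id

/-- Embedding of the second summand `Fin b → Fin (a+b)` as a matrix. -/
noncomputable def emb₂ (a b : ℕ) : Matrix (Fin (a+b)) (Fin b) ℂ :=
  (Matrix.fromRows (0 : Matrix (Fin a) (Fin b) ℂ) (1 : Mat b)).submatrix
    finSumFinEquiv.symm id

lemma conj_reindex {a b c : ℕ} (A : Matrix (Fin a) (Fin c) ℂ) (B : Matrix (Fin b) (Fin c) ℂ)
    (N : Matrix (Fin a ⊕ Fin b) (Fin a ⊕ Fin b) ℂ) :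
    ((fromRows A B).submatrix (finSumFinEquiv.symm) (id : Fin c → Fin c))ᴴ *
      (reindex finSumFinEquiv finSumFinEquiv N) *
      (fromRows A B).submatrix (finSumFinEquiv.symm) id
    = fromCols Aᴴ Bᴴ * N * fromRows A B := by
  rw [conjTranspose_submatrix, reindex_apply, submatrix_mul_equiv, submatrix_mul_equiv,
    submatrix_id_id, conjTranspose_fromRows_eq_fromCols_conjTranspose]

lemma conj_dsum {a b c : ℕ} (A : Matrix (Fin a) (Fin c) ℂ) (B : Matrix (Fin b) (Fin c) ℂ)
    (P : Mat a) (Q : Mat b) :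
    ((fromRows A B).submatrix (finSumFinEquiv.symm) (id : Fin c → Fin c))ᴴ * dsumM P Q *
      (fromRows A B).submatrix (finSumFinEquiv.symm) id = Aᴴ * P * A + Bᴴ * Q * B := by
  rw [dsumM, conj_reindex, fromCols_mul_fromBlocks, fromCols_mul_fromRows]
  simp [Matrix.add_mul]

lemma reindex_mul {a b : ℕ} (M N : Matrix (Fin a ⊕ Fin b) (Fin a ⊕ Fin b) ℂ) :
    (reindex finSumFinEquiv finSumFinEquiv M) * (reindex finSumFinEquiv finSumFinEquiv N)
      = reindex finSumFinEquiv finSumFinEquiv (M * N) := by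
  simp [reindex_apply]

lemma conj_emb₁ {a b : ℕ} (N : Matrix (Fin a ⊕ Fin b) (Fin a ⊕ Fin b) ℂ) :
    (emb₁ a b)ᴴ * (reindex finSumFinEquiv finSumFinEquiv N) * emb₁ a b = N.toBlocks₁₁ := by
  rw [emb₁, conj_reindex]
  conv_lhs => rw [← fromBlocks_toBlocks N]
  rw [fromCols_mul_fromBlocks, fromCols_mul_fromRows]
  simp

lemma conj_emb₂ {a b : ℕ} (N : Matrix (Fin a ⊕ Fin b) (Fin a ⊕ Fin b) ℂ) :
    (emb₂ a b)ᴴ * (reindex finSumFinEquiv finSumFinEquiv N) * emb₂ a b = N.toBlocks₂₂ := by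
  rw [emb₂, conj_reindex]
  conv_lhs => rw [← fromBlocks_toBlocks N]
  rw [fromCols_mul_fromBlocks, fromCols_mul_fromRows]
  simp

lemma dsumM_conjTranspose {a b : ℕ} (A : Mat a) (B : Mat b) :
    (dsumM A B)ᴴ = dsumM Aᴴ Bᴴ := by
  simp [dsumM, fromBlocks_conjTranspose]

lemma dsumM_mul {a b : ℕ} (A A' : Mat a) (B B' : Mat b) :
    dsumM A B * dsumM A' B' = dsumM (A * A') (B * B') := by
  unfold dsumM
  rw [reindex_mul, fromBlocks_multiply]
  simp

lemma dsumM_one {a b : ℕ} : dsumM (1 : Mat a) (1 : Mat b) = 1 := by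
  simp [dsumM, fromBlocks_one]

lemma dsumM_zero {a b : ℕ} : dsumM (0 : Mat a) (0 : Mat b) = 0 := by
  simp [dsumM]

lemma posSemidef_fromBlocks {a b : ℕ} {A : Mat a} {B : Mat b}
    (hA : A.PosSemidef) (hB : B.PosSemidef) :
    (fromBlocks A 0 0 B : Matrix (Fin a ⊕ Fin b) (Fin a ⊕ Fin b) ℂ).PosSemidef := by
  refine .of_dotProduct_mulVec_nonneg ?_ ?_
  · have h1 := hA.1; have h2 := hB.1
    unfold Matrix.IsHermitian at *
    rw [fromBlocks_conjTranspose]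
    simp [h1, h2]
  · intro x
    have hx : star x ⬝ᵥ (fromBlocks A 0 0 B) *ᵥ x
        = star (x ∘ Sum.inl) ⬝ᵥ A *ᵥ (x ∘ Sum.inl)
          + star (x ∘ Sum.inr) ⬝ᵥ B *ᵥ (x ∘ Sum.inr) := by
      rw [fromBlocks_mulVec, dotProduct_block]
      simp
      rfl
    rw [hx]
    exact add_nonneg (hA.dotProduct_mulVec_nonneg _) (hB.dotProduct_mulVec_nonneg _)

lemma posSemidef_dsumM {a b : ℕ} {A : Mat a} {B : Mat b}
    (hA : A.PosSemidef) (hB : B.PosSemidef) : (dsumM A B).PosSemidef := by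
  rw [dsumM, reindex_apply]
  exact (posSemidef_fromBlocks hA hB).submatrix _

lemma posSemidef_dim0 (M : Mat 0) : M.PosSemidef := by
  refine .of_dotProduct_mulVec_nonneg ?_ ?_
  · ext i
    exact i.elim0
  · intro x
    simp [dotProduct]

lemma Loewner_conj {a c : ℕ} {M N : Mat a} (h : Loewner M N) (C : Matrix (Fin a) (Fin c) ℂ) :
    Loewner (Cᴴ * M * C) (Cᴴ * N * C) := by
  unfold Loewner at *
  have := h.conjTranspose_mul_mul_same C
  convert this using 1
  rw [Matrix.mul_sub, Matrix.sub_mul]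

end Stmt13Aux
namespace Stmt13Aux

lemma zero_mem {k : ℕ} {D : ∀ d : ℕ, Set (Fin k → Mat d)}
    (hD : IsSAMatrixConvex k D) (h0 : (fun _ : Fin k => (0 : Mat 1)) ∈ D 1) :
    ∀ n : ℕ, (fun _ : Fin k => (0 : Mat (n+1))) ∈ D (n+1) := by
  intro n
  induction n with
  | zero => exact h0
  | succ n ih =>
    have h := hD.dsum (n+1) 1 _ ih _ h0
    have heq : (fun i : Fin k => dsumM ((fun _ : Fin k => (0 : Mat (n+1))) i)
        ((fun _ : Fin k => (0 : Mat 1)) i)) = (fun _ : Fin k => (0 : Mat (n+1+1))) := by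
      funext i
      exact dsumM_zero
    rw [heq] at h
    exact h

lemma F0_psd {k : ℕ} {D : ∀ d : ℕ, Set (Fin k → Mat d)}
    {F : ∀ d : ℕ, (Fin k → Mat d) → Mat d}
    (hD : IsSAMatrixConvex k D) (hF : IsFreeFn k D F)
    (h0 : (fun _ : Fin k => (0 : Mat 1)) ∈ D 1)
    (hF0 : (F 1 (fun _ => 0)).PosSemidef) :
    ∀ n : ℕ, (F (n+1) (fun _ => (0 : Mat (n+1)))).PosSemidef := by
  intro n
  induction n with
  | zero => exact hF0
  | succ n ih =>
    have h := hF.dsum (n+1) 1 _ (zero_mem hD h0 n) _ h0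
    have heq : (fun i : Fin k => dsumM ((fun _ : Fin k => (0 : Mat (n+1))) i)
        ((fun _ : Fin k => (0 : Mat 1)) i)) = (fun _ : Fin k => (0 : Mat (n+1+1))) := by
      funext i
      exact dsumM_zero
    rw [heq] at h
    rw [h]
    exact posSemidef_dsumM ih hF0

lemma exists_unitary_completion (d m : ℕ) (V : Matrix (Fin (d+m)) (Fin d) ℂ)
    (hV : Vᴴ * V = 1) :
    ∃ U : Mat (d+m), Uᴴ * U = 1 ∧ U * emb₁ d m = V := by
  classical
  let w : Fin d → EuclideanSpace ℂ (Fin (d+m)) := fun c => WithLp.toLp 2 (fun r => V r c)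
  let v : Fin (d+m) → EuclideanSpace ℂ (Fin (d+m)) := fun j =>
    if h : (j : ℕ) < d then w ⟨(j : ℕ), h⟩ else 0
  have hinner : ∀ a c : Fin d, (inner ℂ (w a) (w c) : ℂ) = (Vᴴ * V) a c := by
    intro a c
    simp [w, PiLp.inner_apply, RCLike.inner_apply, Matrix.mul_apply,
      Matrix.conjTranspose_apply, mul_comm]
  have hortho : Orthonormal ℂ (Set.restrict {j : Fin (d+m) | (j : ℕ) < d} v) := by
    rw [orthonormal_iff_ite]
    rintro ⟨j, hj⟩ ⟨j', hj'⟩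
    simp only [Set.restrict, Set.domRestrict_apply, v]
    rw [dif_pos (show ((j : ℕ) < d) from hj), dif_pos (show ((j' : ℕ) < d) from hj')]
    rw [hinner, hV, Matrix.one_apply]
    simp [Fin.ext_iff, Subtype.ext_iff]
  obtain ⟨b, hb⟩ := hortho.exists_orthonormalBasis_extension_of_card_eq (by simp)
  refine ⟨Matrix.of (fun i j => b j i), ?_, ?_⟩
  · ext a c
    have hob := b.orthonormal
    rw [orthonormal_iff_ite] at hob
    have h := hob a c
    rw [PiLp.inner_apply] at h
    simp only [RCLike.inner_apply] at h
    simp only [Matrix.mul_apply, Matrix.conjTranspose_apply, Matrix.of_apply,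
      Matrix.one_apply]
    simpa [mul_comm] using h
  · ext i j
    rw [Matrix.mul_apply]
    rw [← Equiv.sum_comp (finSumFinEquiv : Fin d ⊕ Fin m ≃ Fin (d+m))]
    rw [Fintype.sum_sum_type]
    have hterm : ∀ p : Fin m,
        (Matrix.of (fun i j => b j i)) i (finSumFinEquiv (Sum.inr p)) *
          (emb₁ d m) (finSumFinEquiv (Sum.inr p)) j = 0 := by
      intro p
      simp [emb₁, Matrix.submatrix_apply, Matrix.fromRows, Sum.elim_inr]
      exact Or.inr rfl
    rw [Finset.sum_congr rfl (fun p _ => hterm p), Finset.sum_const, smul_zero, add_zero]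
    have hterm1 : ∀ p : Fin d,
        (Matrix.of (fun i j => b j i)) i (finSumFinEquiv (Sum.inl p)) *
          (emb₁ d m) (finSumFinEquiv (Sum.inl p)) j
        = b (finSumFinEquiv (Sum.inl p)) i * (if p = j then 1 else 0) := by
      intro p
      simp [emb₁, Matrix.submatrix_apply, Matrix.fromRows, Matrix.one_apply, Sum.elim_inl]
      show _ * (1 : Mat d) p j = _
      simp [Matrix.one_apply]
    rw [Finset.sum_congr rfl (fun p _ => hterm1 p)]
    have hsum : (∑ p : Fin d, b (finSumFinEquiv (Sum.inl p)) i * if p = j then 1 else 0)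
        = b (finSumFinEquiv (Sum.inl j)) i := by simp
    rw [hsum, finSumFinEquiv_apply_left]
    have hmem : (Fin.castAdd m j : Fin (d+m)) ∈ {j : Fin (d+m) | (j : ℕ) < d} := by
      simp only [Set.mem_setOf_eq, Fin.coe_castAdd]
      exact j.isLt
    rw [hb _ hmem]
    show v (Fin.castAdd m j) i = V i j
    have hlt : ((Fin.castAdd m j : Fin (d+m)) : ℕ) < d := hmem
    simp only [v]
    rw [dif_pos hlt]
    show V i ⟨((Fin.castAdd m j : Fin (d+m)) : ℕ), hlt⟩ = V i j
    have hfin : (⟨((Fin.castAdd m j : Fin (d+m)) : ℕ), hlt⟩ : Fin d) = j := Fin.ext (by simp)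
    rw [hfin]

end Stmt13Aux
namespace Stmt13Aux

lemma emb₂_isometry (a b : ℕ) : (emb₂ a b)ᴴ * emb₂ a b = 1 := by
  rw [emb₂, conjTranspose_submatrix, submatrix_mul_equiv, submatrix_id_id,
    conjTranspose_fromRows_eq_fromCols_conjTranspose, fromCols_mul_fromRows]
  simp

lemma jensen_emb {k : ℕ} {D : ∀ d : ℕ, Set (Fin k → Mat d)}
    {F : ∀ d : ℕ, (Fin k → Mat d) → Mat d}
    (hD : IsSAMatrixConvex k D) (hF : IsFreeFn k D F) (hconc : IsOpConcave k D F)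
    (d m : ℕ) (Z : Fin k → Mat (d+m)) (hZ : Z ∈ D (d+m))
    (hA : (fun i => (emb₁ d m)ᴴ * Z i * emb₁ d m) ∈ D d) :
    Loewner ((emb₁ d m)ᴴ * F (d+m) Z * emb₁ d m)
      (F d (fun i => (emb₁ d m)ᴴ * Z i * emb₁ d m)) := by
  set σ : Mat (d+m) := dsumM (1 : Mat d) (-1 : Mat m) with hσdef
  have hσH : σᴴ = σ := by
    rw [hσdef, dsumM_conjTranspose]
    simp
  have hσσ : σ * σ = 1 := by
    rw [hσdef, dsumM_mul]
    simp [dsumM_one]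
  have hσu : σ ∈ Matrix.unitaryGroup (Fin (d+m)) ℂ := by
    rw [Matrix.mem_unitaryGroup_iff, Matrix.star_eq_conjTranspose, hσH]
    exact hσσ
  have hZ' : (fun i => σᴴ * Z i * σ) ∈ D (d+m) := hD.unitary _ σ hσu Z hZ
  have hB : (fun i => (emb₂ d m)ᴴ * Z i * emb₂ d m) ∈ D m :=
    hD.isom m (d+m) (emb₂ d m) (emb₂_isometry d m) Z hZ
  have hc : ((1 - (2⁻¹ : ℝ) : ℝ) : ℂ) = ((2⁻¹ : ℝ) : ℂ) := by norm_num
  have hMM : ∀ (p q : ℕ) (M : Matrix (Fin p) (Fin q) ℂ),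
      ((1 - (2⁻¹ : ℝ) : ℝ) : ℂ) • M + ((2⁻¹ : ℝ) : ℂ) • M = M := by
    intro p q M
    rw [← add_smul]
    norm_num
  have hMneg : ∀ (p q : ℕ) (M : Matrix (Fin p) (Fin q) ℂ),
      ((1 - (2⁻¹ : ℝ) : ℝ) : ℂ) • M + ((2⁻¹ : ℝ) : ℂ) • (-M) = 0 := by
    intro p q M
    rw [hc, smul_neg]
    simp
  have key : ∀ i, ((1 - (2⁻¹ : ℝ) : ℝ) : ℂ) • Z i + ((2⁻¹ : ℝ) : ℂ) • (σᴴ * Z i * σ)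
      = dsumM ((emb₁ d m)ᴴ * Z i * emb₁ d m) ((emb₂ d m)ᴴ * Z i * emb₂ d m) := by
    intro i
    obtain ⟨P, Q, R, S, hN⟩ : ∃ P Q R S,
        Z i = reindex finSumFinEquiv finSumFinEquiv (fromBlocks P Q R S) := by
      refine ⟨((reindex finSumFinEquiv finSumFinEquiv).symm (Z i)).toBlocks₁₁,
        ((reindex finSumFinEquiv finSumFinEquiv).symm (Z i)).toBlocks₁₂,
        ((reindex finSumFinEquiv finSumFinEquiv).symm (Z i)).toBlocks₂₁,
        ((reindex finSumFinEquiv finSumFinEquiv).symm (Z i)).toBlocks₂₂, ?_⟩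
      rw [fromBlocks_toBlocks ((reindex finSumFinEquiv finSumFinEquiv).symm (Z i))]
      simp
    rw [hN, conj_emb₁, conj_emb₂, hσH, toBlocks_fromBlocks₁₁, toBlocks_fromBlocks₂₂]
    have hσZσ : σ * reindex finSumFinEquiv finSumFinEquiv (fromBlocks P Q R S) * σ
        = reindex finSumFinEquiv finSumFinEquiv (fromBlocks P (-Q) (-R) S) := by
      rw [hσdef, dsumM, reindex_mul, reindex_mul]
      congr 1
      rw [fromBlocks_multiply, fromBlocks_multiply]
      simp
    rw [hσZσ, dsumM]
    simp only [reindex_apply]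
    have hblocks : ((1 - (2⁻¹ : ℝ) : ℝ) : ℂ) • fromBlocks P Q R S
        + ((2⁻¹ : ℝ) : ℂ) • fromBlocks P (-Q) (-R) S = fromBlocks P 0 0 S := by
      rw [fromBlocks_smul, fromBlocks_smul, fromBlocks_add, hMM, hMM, hMneg, hMneg]
    calc ((1 - (2⁻¹ : ℝ) : ℝ) : ℂ) • (fromBlocks P Q R S).submatrix
            ⇑finSumFinEquiv.symm ⇑finSumFinEquiv.symm
          + ((2⁻¹ : ℝ) : ℂ) • (fromBlocks P (-Q) (-R) S).submatrix
            ⇑finSumFinEquiv.symm ⇑finSumFinEquiv.symm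
        = (((1 - (2⁻¹ : ℝ) : ℝ) : ℂ) • fromBlocks P Q R S
            + ((2⁻¹ : ℝ) : ℂ) • fromBlocks P (-Q) (-R) S).submatrix
            ⇑finSumFinEquiv.symm ⇑finSumFinEquiv.symm := rfl
      _ = (fromBlocks P 0 0 S).submatrix ⇑finSumFinEquiv.symm ⇑finSumFinEquiv.symm := by
          rw [hblocks]
  have hcomb := hconc (d+m) Z hZ _ hZ' (2⁻¹ : ℝ) (by norm_num) (by norm_num)
  simp only [key] at hcomb
  rw [hF.dsum d m _ hA _ hB] at hcomb
  rw [hF.unitary (d+m) σ hσu Z hZ] at hcomb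
  have hcomp := Loewner_conj hcomb (emb₁ d m)
  have hRHS : (emb₁ d m)ᴴ * dsumM (F d (fun i => (emb₁ d m)ᴴ * Z i * emb₁ d m))
      (F m (fun i => (emb₂ d m)ᴴ * Z i * emb₂ d m)) * emb₁ d m
      = F d (fun i => (emb₁ d m)ᴴ * Z i * emb₁ d m) := by
    rw [emb₁, conj_dsum]
    simp
  have hσι : σ * emb₁ d m = emb₁ d m := by
    rw [hσdef, dsumM, emb₁, reindex_apply, submatrix_mul_equiv, fromBlocks_mul_fromRows]
    simp
  have hισ : (emb₁ d m)ᴴ * σ = (emb₁ d m)ᴴ := by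
    have h := congrArg Matrix.conjTranspose hσι
    rw [conjTranspose_mul, hσH] at h
    exact h
  have h2 : (emb₁ d m)ᴴ * (σ * F (d+m) Z * σ) * emb₁ d m
      = (emb₁ d m)ᴴ * F (d+m) Z * emb₁ d m := by
    simp only [← Matrix.mul_assoc]
    rw [hισ, Matrix.mul_assoc, hσι]
  have hLHS : (emb₁ d m)ᴴ * (((1 - (2⁻¹ : ℝ) : ℝ) : ℂ) • F (d+m) Z
      + ((2⁻¹ : ℝ) : ℂ) • (σᴴ * F (d+m) Z * σ)) * emb₁ d m
      = (emb₁ d m)ᴴ * F (d+m) Z * emb₁ d m := by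
    rw [hσH]
    simp only [Matrix.mul_add, Matrix.add_mul, Matrix.mul_smul, Matrix.smul_mul]
    rw [h2, hMM]
  rw [hRHS, hLHS] at hcomp
  exact hcomp

end Stmt13Aux

open Stmt13Aux in
/-- if an operator concave free function `F` on a self-adjoint
matrix convex domain satisfies `0 ∈ D(ℂ)` and `F(0) ≥ 0`, then the Jensen
inequality `F(Wᴴ X W) ≥ Wᴴ F(X) W` holds for all contractions `W : E → K`
(i.e. `1 - Wᴴ W ≥ 0`) and all `X ∈ D(K)` with `Wᴴ X W ∈ D(E)`. -/
theorem stmt13 (k : ℕ) (D : ∀ d : ℕ, Set (Fin k → Mat d))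
    (F : ∀ d : ℕ, (Fin k → Mat d) → Mat d)
    (hD : IsSAMatrixConvex k D) (hF : IsFreeFn k D F)
    (hconc : IsOpConcave k D F)
    (h0 : (fun _ : Fin k => (0 : Mat 1)) ∈ D 1)
    (hF0 : (F 1 (fun _ => 0)).PosSemidef) :
    ∀ (d d' : ℕ) (W : Matrix (Fin d') (Fin d) ℂ), (1 - Wᴴ * W).PosSemidef →
      ∀ X ∈ D d', (fun i => Wᴴ * X i * W) ∈ D d →
        Loewner (Wᴴ * F d' X * W) (F d (fun i => Wᴴ * X i * W)) := by
  intro d d' W hW X hX hWXW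
  rcases Nat.eq_zero_or_pos d with hd0 | hdpos
  · subst hd0
    unfold Loewner
    exact posSemidef_dim0 _
  obtain ⟨n, rfl⟩ : ∃ n, d = n + 1 := ⟨d - 1, (Nat.succ_pred_eq_of_pos hdpos).symm⟩
  have h0d : (fun _ : Fin k => (0 : Mat (n+1))) ∈ D (n+1) := zero_mem hD h0 n
  have hF0d : (F (n+1) (fun _ => (0 : Mat (n+1)))).PosSemidef := F0_psd hD hF h0 hF0 n
  have hC : (1 - Wᴴ * W).PosSemidef := hW
  obtain ⟨S, hS2, hSH⟩ : ∃ S : Mat (n+1), S * S = 1 - Wᴴ * W ∧ Sᴴ = S := by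
    open scoped MatrixOrder in
    exact ⟨CFC.sqrt (1 - Wᴴ * W), CFC.sqrt_mul_sqrt_self _ hC.nonneg,
      (CFC.sqrt_nonneg _).posSemidef.1⟩
  set V : Matrix (Fin (n+1+d')) (Fin (n+1)) ℂ :=
    (fromRows S W).submatrix finSumFinEquiv.symm id with hVdef
  have hVV : Vᴴ * V = 1 := by
    rw [hVdef, conjTranspose_submatrix, submatrix_mul_equiv, submatrix_id_id,
      conjTranspose_fromRows_eq_fromCols_conjTranspose, fromCols_mul_fromRows, hSH, hS2,
      sub_add_cancel]
  obtain ⟨U, hU1, hUemb⟩ := exists_unitary_completion (n+1) d' V hVV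
  have hUu : U ∈ Matrix.unitaryGroup (Fin (n+1+d')) ℂ := by
    rw [Matrix.mem_unitaryGroup_iff', Matrix.star_eq_conjTranspose]
    exact hU1
  have hY : (fun i => dsumM (0 : Mat (n+1)) (X i)) ∈ D (n+1+d') :=
    hD.dsum (n+1) d' (fun _ => 0) h0d X hX
  have hZ : (fun i => Uᴴ * (dsumM (0 : Mat (n+1)) (X i)) * U) ∈ D (n+1+d') :=
    hD.unitary (n+1+d') U hUu _ hY
  have hconjV : ∀ M : Mat (n+1+d'),
      (emb₁ (n+1) d')ᴴ * (Uᴴ * M * U) * emb₁ (n+1) d' = Vᴴ * M * V := by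
    intro M
    rw [← hUemb, conjTranspose_mul]
    simp only [Matrix.mul_assoc]
  have hkey : (fun i => (emb₁ (n+1) d')ᴴ * (Uᴴ * (dsumM (0 : Mat (n+1)) (X i)) * U)
      * emb₁ (n+1) d') = fun i => Wᴴ * X i * W := by
    funext i
    rw [hconjV, hVdef, conj_dsum]
    simp
  have hAmem : (fun i => (emb₁ (n+1) d')ᴴ * (Uᴴ * (dsumM (0 : Mat (n+1)) (X i)) * U)
      * emb₁ (n+1) d') ∈ D (n+1) := by
    rw [hkey]
    exact hWXW
  have hJ := jensen_emb hD hF hconc (n+1) d'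
    (fun i => Uᴴ * (dsumM (0 : Mat (n+1)) (X i)) * U) hZ hAmem
  rw [hkey] at hJ
  have hFZ : F (n+1+d') (fun i => Uᴴ * (dsumM (0 : Mat (n+1)) (X i)) * U)
      = Uᴴ * F (n+1+d') (fun i => dsumM (0 : Mat (n+1)) (X i)) * U :=
    hF.unitary (n+1+d') U hUu _ hY
  have hFY : F (n+1+d') (fun i => dsumM (0 : Mat (n+1)) (X i))
      = dsumM (F (n+1) (fun _ => 0)) (F d' X) :=
    hF.dsum (n+1) d' (fun _ => 0) h0d X hX
  have hcompute : (emb₁ (n+1) d')ᴴ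
      * F (n+1+d') (fun i => Uᴴ * (dsumM (0 : Mat (n+1)) (X i)) * U) * emb₁ (n+1) d'
      = S * (F (n+1) (fun _ => 0)) * S + Wᴴ * F d' X * W := by
    rw [hFZ, hFY, hconjV, hVdef, conj_dsum, hSH]
  rw [hcompute] at hJ
  have hpos : (S * F (n+1) (fun _ => (0 : Mat (n+1))) * S).PosSemidef := by
    have h := hF0d.mul_mul_conjTranspose_same S
    rwa [hSH] at h
  unfold Loewner at hJ ⊢
  have hfin : F (n+1) (fun i => Wᴴ * X i * W) - Wᴴ * F d' X * W
      = (F (n+1) (fun i => Wᴴ * X i * W)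
          - (S * F (n+1) (fun _ => 0) * S + Wᴴ * F d' X * W))
        + S * F (n+1) (fun _ => 0) * S := by
    abel
  rw [hfin]
  exact hJ.add hpos
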